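/- The solution map ξ : [0,∞] × ℝ² × D² → D² of the unreflected auxiliary system (sending (B,b,y) to the unique solution w) is continuous with respect to the product topology, when [0,∞] is equipped with the order topology and D with the topology of uniform convergence over bounded intervals; moreover, if y is continuous then so is w = ξ(B,b,y). -/

import Mathlib

open MeasureTheory Filter Set
open scoped ENNReal

noncomputable section

/-- `f` is càdlàg on `[0,∞)`: right-continuous at every `t ≥ 0` and possessing
finite left limits at every `t > 0`.  (Values on `(-∞,0)` are irrelevant.) -/
def Cadlag (f : ℝ → ℝ) : Prop :=
  (∀ t : ℝ, 0 ≤ t → ContinuousWithinAt f (Set.Ici t) t) ∧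
    (∀ t : ℝ, 0 < t → ∃ L : ℝ, Filter.Tendsto f (nhdsWithin t (Set.Iio t)) (nhds L))

/-- Uniform norm of `x` on `[0,t]`: `‖x‖_t = sup_{0 ≤ s ≤ t} |x(s)|`. -/
def unif (x : ℝ → ℝ) (t : ℝ) : ℝ := ⨆ s : Set.Icc (0:ℝ) t, |x s.1|

/-- Regulator of the one-sided reflection map with upper barrier `κ ∈ ℝ`:
`ψ_κ(x)(t) = sup_{0 ≤ s ≤ t} (x(s) - κ)⁺`. -/
def psiR (κ : ℝ) (x : ℝ → ℝ) (t : ℝ) : ℝ := ⨆ s : Set.Icc (0:ℝ) t, max (x s.1 - κ) 0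

/-- One-sided reflection map with upper barrier `κ ∈ ℝ`: `φ_κ(x) = x - ψ_κ(x)`. -/
def phiR (κ : ℝ) (x : ℝ → ℝ) (t : ℝ) : ℝ := x t - psiR κ x t

/-- Regulator for a barrier `κ ∈ [0,∞]`; for `κ = ∞` it is identically `0`. -/
def psiE (κ : ℝ≥0∞) (x : ℝ → ℝ) : ℝ → ℝ := if κ = ⊤ then 0 else psiR κ.toReal x

/-- Reflection map for a barrier `κ ∈ [0,∞]`; for `κ = ∞` it is the identity. -/
def phiE (κ : ℝ≥0∞) (x : ℝ → ℝ) : ℝ → ℝ := if κ = ⊤ then x else phiR κ.toReal x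

/-- "`∫ 𝟙_S du = 0`": every Stieltjes function agreeing with the
(constant-below-zero extension of) `u` assigns measure zero to `S`. -/
def ZeroStieltjesOn (u : ℝ → ℝ) (S : Set ℝ) : Prop :=
  ∀ sf : StieltjesFunction ℝ, (∀ t : ℝ, sf t = u (max t 0)) → sf.measure S = 0

/-- `u₁, u₂` is a valid pair of regulator processes for `x₁` (barrier `0` from above)
and `x₂` (upper barrier `B ∈ [0,∞]`): nondecreasing nonnegative elements of `D` with
`∫₀^∞ 𝟙{x₁(t) < 0} du₁(t) = 0` and `∫₀^∞ 𝟙{x₂(t) < B} du₂(t) = 0`. -/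
def IsRegulator (B : ℝ≥0∞) (x₁ x₂ u₁ u₂ : ℝ → ℝ) : Prop :=
  Cadlag u₁ ∧ Cadlag u₂ ∧ MonotoneOn u₁ (Set.Ici 0) ∧ MonotoneOn u₂ (Set.Ici 0) ∧
    (∀ t ≥ (0:ℝ), 0 ≤ u₁ t) ∧ (∀ t ≥ (0:ℝ), 0 ≤ u₂ t) ∧
    ZeroStieltjesOn u₁ {t | 0 ≤ t ∧ x₁ t < 0} ∧
    ZeroStieltjesOn u₂ {t | 0 ≤ t ∧ ENNReal.ofReal (x₂ t) < B}
/-- `(w₁, w₂)` solves the unreflected auxiliary system with data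
`(B, b₁, b₂, y₁, y₂)` (equations (20)-(21) of the paper). -/
def IsAuxSolution (B : ℝ≥0∞) (b₁ b₂ : ℝ) (y₁ y₂ w₁ w₂ : ℝ → ℝ) : Prop :=
  Cadlag w₁ ∧ Cadlag w₂ ∧
  (∀ t ≥ (0:ℝ), w₁ t =
      b₁ + y₁ t + ∫ s in (0:ℝ)..t, (-(phiR 0 w₁ s) + phiE B w₂ s)) ∧
  (∀ t ≥ (0:ℝ), w₂ t =
      b₂ + y₂ t + psiR 0 w₁ t + ∫ s in (0:ℝ)..t, -(phiE B w₂ s)) ∧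
  (∀ t ≥ (0:ℝ), 0 ≤ w₂ t)



/-- A càdlàg function is bounded on `[0,T]`. -/
lemma Cadlag.bounded {f : ℝ → ℝ} (hf : Cadlag f) {T : ℝ} (hT : 0 ≤ T) :
    ∃ M : ℝ, ∀ s ∈ Set.Icc (0:ℝ) T, |f s| ≤ M := by
  -- every point of [0,T] has a neighborhood on which f∘(restriction to [0,∞)) is bounded
  have key : ∀ x ∈ Set.Icc (0:ℝ) T, ∃ U ∈ nhds x, ∃ M : ℝ,
      ∀ s ∈ U ∩ Set.Ici (0:ℝ), |f s| ≤ M := by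
    intro x hx
    have hrc := hf.1 x hx.1
    rw [ContinuousWithinAt] at hrc
    have h1 : {s : ℝ | |f s| ≤ |f x| + 1} ∈ nhdsWithin x (Set.Ici x) := by
      filter_upwards [hrc (Metric.closedBall_mem_nhds (f x) one_pos)] with s hs
      have : |f s - f x| ≤ 1 := by simpa [Real.dist_eq] using hs
      calc |f s| = |f x + (f s - f x)| := by ring_nf
        _ ≤ |f x| + |f s - f x| := abs_add_le _ _
        _ ≤ |f x| + 1 := by linarith
    rcases eq_or_lt_of_le hx.1 with h0 | h0
    · -- x = 0 : only the right side matters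
      rw [nhdsWithin, Filter.mem_inf_iff] at h1
      obtain ⟨U, hU, V, hV, hUV⟩ := h1
      refine ⟨U, hU, |f x| + 1, fun s hs => ?_⟩
      have hsV : s ∈ V := hV (show s ∈ Set.Ici x from h0 ▸ hs.2)
      have : s ∈ U ∩ V := ⟨hs.1, hsV⟩
      rw [← hUV] at this; exact this
    · -- x > 0 : use the left limit too
      obtain ⟨L, hL⟩ := hf.2 x h0
      have h2 : {s : ℝ | |f s| ≤ |L| + 1} ∈ nhdsWithin x (Set.Iio x) := by
        filter_upwards [hL (Metric.closedBall_mem_nhds L one_pos)] with s hs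
        have : |f s - L| ≤ 1 := by simpa [Real.dist_eq] using hs
        calc |f s| = |L + (f s - L)| := by ring_nf
          _ ≤ |L| + |f s - L| := abs_add_le _ _
          _ ≤ |L| + 1 := by linarith
      rw [nhdsWithin, Filter.mem_inf_iff] at h1 h2
      obtain ⟨U1, hU1, V1, hV1, hUV1⟩ := h1
      obtain ⟨U2, hU2, V2, hV2, hUV2⟩ := h2
      refine ⟨U1 ∩ U2, Filter.inter_mem hU1 hU2, max (|f x| + 1) (|L| + 1),
        fun s hs => ?_⟩
      rcases le_or_gt x s with hxs | hxs
      · have : s ∈ U1 ∩ V1 := ⟨hs.1.1, hV1 hxs⟩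
        rw [← hUV1] at this
        exact le_trans this (le_max_left _ _)
      · have : s ∈ U2 ∩ V2 := ⟨hs.1.2, hV2 hxs⟩
        rw [← hUV2] at this
        exact le_trans this (le_max_right _ _)
  choose U hU M hM using key
  obtain ⟨ι, hcover⟩ := isCompact_Icc.elim_nhds_subcover' U hU
  rcases ι.eq_empty_or_nonempty with rfl | hne
  · refine ⟨0, fun s hs => ?_⟩
    have := hcover hs; simp at this
  · refine ⟨ι.sup' hne (fun x => M x.1 x.2), fun s hs => ?_⟩
    obtain ⟨x, hxι, hxU⟩ := Set.mem_iUnion₂.1 (hcover hs)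
    exact le_trans (hM x.1 x.2 s ⟨hxU, hs.1⟩) (Finset.le_sup' (fun x => M x.1 x.2) hxι)


section SupLemmas
variable {x x' : ℝ → ℝ} {κ κ' t T M c : ℝ}

/-- Boundedness structure we carry around: `|x s| ≤ M` on `[0,t]`. -/
def BddOn (x : ℝ → ℝ) (M t : ℝ) : Prop := ∀ s ∈ Set.Icc (0:ℝ) t, |x s| ≤ M

lemma BddOn.mono (h : BddOn x M T) (htT : t ≤ T) : BddOn x M t :=
  fun s hs => h s ⟨hs.1, hs.2.trans htT⟩

lemma BddOn.bddAbove_abs (h : BddOn x M t) :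
    BddAbove (Set.range fun s : Set.Icc (0:ℝ) t => |x s.1|) :=
  ⟨M, by rintro _ ⟨s, rfl⟩; exact h s.1 s.2⟩

lemma BddOn.bddAbove_max (h : BddOn x M t) :
    BddAbove (Set.range fun s : Set.Icc (0:ℝ) t => max (x s.1 - κ) 0) :=
  ⟨max (M - κ) 0, by
    rintro _ ⟨s, rfl⟩
    exact max_le_max (by have := (abs_le.1 (h s.1 s.2)).2; linarith) le_rfl⟩

lemma le_unif (h : BddOn x M t) {s : ℝ} (hs : s ∈ Set.Icc (0:ℝ) t) :
    |x s| ≤ unif x t := le_ciSup h.bddAbove_abs (⟨s, hs⟩ : Set.Icc (0:ℝ) t)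

lemma unif_nonneg : 0 ≤ unif x t := Real.iSup_nonneg fun s => abs_nonneg _

lemma unif_le (ht : 0 ≤ t) (h : ∀ s ∈ Set.Icc (0:ℝ) t, |x s| ≤ c) :
    unif x t ≤ c := by
  haveI : Nonempty (Set.Icc (0:ℝ) t) := ⟨⟨0, le_refl 0, ht⟩⟩
  exact ciSup_le fun s => h s.1 s.2

lemma unif_monoOn (h : BddOn x M T) : MonotoneOn (unif x) (Set.Icc (0:ℝ) T) := by
  intro t1 h1 t2 h2 h12
  exact unif_le h1.1 fun s hs => le_unif (h.mono h2.2) ⟨hs.1, hs.2.trans h12⟩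

lemma psiR_nonneg : 0 ≤ psiR κ x t := Real.iSup_nonneg fun s => le_max_right _ _

lemma psiR_le (ht : 0 ≤ t) (h : ∀ s ∈ Set.Icc (0:ℝ) t, max (x s - κ) 0 ≤ c) :
    psiR κ x t ≤ c := by
  haveI : Nonempty (Set.Icc (0:ℝ) t) := ⟨⟨0, le_refl 0, ht⟩⟩
  exact ciSup_le fun s => h s.1 s.2

lemma le_psiR (h : BddOn x M t) {s : ℝ} (hs : s ∈ Set.Icc (0:ℝ) t) :
    max (x s - κ) 0 ≤ psiR κ x t :=
  le_ciSup (h.bddAbove_max (κ := κ)) (⟨s, hs⟩ : Set.Icc (0:ℝ) t)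

lemma psiR_monoOn (h : BddOn x M T) : MonotoneOn (psiR κ x) (Set.Icc (0:ℝ) T) := by
  intro t1 h1 t2 h2 h12
  exact psiR_le h1.1 fun s hs => le_psiR (h.mono h2.2) ⟨hs.1, hs.2.trans h12⟩

lemma psiR_le_unif (ht : 0 ≤ t) (hκ : 0 ≤ κ) (h : BddOn x M t) :
    psiR κ x t ≤ unif x t := by
  refine psiR_le ht fun s hs => ?_
  have h1 : x s - κ ≤ |x s| := (sub_le_self _ hκ).trans (le_abs_self _)
  exact max_le (h1.trans (le_unif h hs)) (le_trans (abs_nonneg _) (le_unif h hs))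

lemma abs_psiR_sub_psiR (ht : 0 ≤ t) (hx : BddOn x M t) {M' : ℝ} (hx' : BddOn x' M' t) :
    |psiR κ x t - psiR κ x' t| ≤ unif (fun s => x s - x' s) t := by
  have hd : BddOn (fun s => x s - x' s) (M + M') t := fun s hs =>
    (abs_sub _ _ ).trans (add_le_add (hx s hs) (hx' s hs))
  rw [abs_sub_le_iff]
  constructor
  · rw [sub_le_iff_le_add]
    refine psiR_le ht fun s hs => ?_
    calc max (x s - κ) 0 ≤ max (x' s - κ) 0 + |(x s - κ) - (x' s - κ)| := by
          have := abs_max_sub_max_le_abs (x s - κ) (x' s - κ) 0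
          have := (abs_le.1 this).2; linarith [abs_nonneg ((x s - κ) - (x' s - κ))]
      _ ≤ unif (fun s => x s - x' s) t + psiR κ x' t := by
          have h1 := le_psiR (κ := κ) hx' hs
          have : (x s - κ) - (x' s - κ) = x s - x' s := by ring
          rw [this]
          have h2 := le_unif hd hs
          linarith
  · rw [sub_le_iff_le_add]
    refine psiR_le ht fun s hs => ?_
    calc max (x' s - κ) 0 ≤ max (x s - κ) 0 + |(x' s - κ) - (x s - κ)| := by
          have := abs_max_sub_max_le_abs (x' s - κ) (x s - κ) 0
          have := (abs_le.1 this).2; linarith [abs_nonneg ((x' s - κ) - (x s - κ))]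
      _ ≤ unif (fun s => x s - x' s) t + psiR κ x t := by
          have h1 := le_psiR (κ := κ) hx hs
          have : (x' s - κ) - (x s - κ) = -(x s - x' s) := by ring
          rw [this, abs_neg]
          have h2 := le_unif hd hs
          linarith

lemma abs_psiR_sub_psiR_kappa (ht : 0 ≤ t) (hx : BddOn x M t) :
    |psiR κ x t - psiR κ' x t| ≤ |κ - κ'| := by
  rw [abs_sub_le_iff]
  constructor
  · rw [sub_le_iff_le_add]
    refine psiR_le ht fun s hs => ?_
    calc max (x s - κ) 0 ≤ max (x s - κ') 0 + |(x s - κ) - (x s - κ')| := by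
          have := abs_max_sub_max_le_abs (x s - κ) (x s - κ') 0
          have := (abs_le.1 this).2; linarith [abs_nonneg ((x s - κ) - (x s - κ'))]
      _ ≤ |κ - κ'| + psiR κ' x t := by
          have h1 := le_psiR (κ := κ') hx hs
          have : (x s - κ) - (x s - κ') = -(κ - κ') := by ring
          rw [this, abs_neg]
          linarith
  · rw [sub_le_iff_le_add]
    refine psiR_le ht fun s hs => ?_
    calc max (x s - κ') 0 ≤ max (x s - κ) 0 + |(x s - κ') - (x s - κ)| := by
          have := abs_max_sub_max_le_abs (x s - κ') (x s - κ) 0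
          have := (abs_le.1 this).2; linarith [abs_nonneg ((x s - κ') - (x s - κ))]
      _ ≤ |κ - κ'| + psiR κ x t := by
          have h1 := le_psiR (κ := κ) hx hs
          have : (x s - κ') - (x s - κ) = κ - κ' := by ring
          rw [this]
          linarith

lemma phiE_eq (κ : ℝ≥0∞) (x : ℝ → ℝ) (t : ℝ) : phiE κ x t = x t - psiE κ x t := by
  unfold phiE psiE phiR
  split <;> simp

lemma psiE_nonneg (κ : ℝ≥0∞) : 0 ≤ psiE κ x t := by
  unfold psiE; split
  · simp
  · exact psiR_nonneg

lemma psiE_le_unif (ht : 0 ≤ t) (h : BddOn x M t) (κ : ℝ≥0∞) :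
    psiE κ x t ≤ unif x t := by
  unfold psiE; split
  · simpa using unif_nonneg
  · refine psiR_le ht fun s hs => max_le ?_ (le_trans (abs_nonneg _) (le_unif h hs))
    have : x s - κ.toReal ≤ x s := sub_le_self _ ENNReal.toReal_nonneg
    exact this.trans ((le_abs_self _).trans (le_unif h hs))

lemma abs_phiE_sub_phiE (ht : 0 ≤ t) (hx : BddOn x M t) {M' : ℝ} (hx' : BddOn x' M' t)
    (κ : ℝ≥0∞) {s : ℝ} (hs : s ∈ Set.Icc (0:ℝ) t) :
    |phiE κ x s - phiE κ x' s| ≤ 2 * unif (fun u => x u - x' u) t := by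
  have hd : BddOn (fun u => x u - x' u) (M + M') t := fun u hu =>
    (abs_sub _ _).trans (add_le_add (hx u hu) (hx' u hu))
  have h1 : |x s - x' s| ≤ unif (fun u => x u - x' u) t := le_unif hd hs
  rw [phiE_eq, phiE_eq]
  have h2 : |psiE κ x s - psiE κ x' s| ≤ unif (fun u => x u - x' u) t := by
    unfold psiE; split
    · simpa using unif_nonneg
    · calc |psiR κ.toReal x s - psiR κ.toReal x' s|
          ≤ unif (fun u => x u - x' u) s :=
            abs_psiR_sub_psiR hs.1 (hx.mono hs.2) (hx'.mono hs.2)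
        _ ≤ unif (fun u => x u - x' u) t := unif_monoOn hd ⟨hs.1, hs.2⟩ ⟨ht, le_rfl⟩ hs.2
  calc |x s - psiE κ x s - (x' s - psiE κ x' s)|
      = |(x s - x' s) - (psiE κ x s - psiE κ x' s)| := by ring_nf
    _ ≤ |x s - x' s| + |psiE κ x s - psiE κ x' s| := abs_sub _ _
    _ ≤ 2 * unif (fun u => x u - x' u) t := by linarith

end SupLemmas


/-- Composing any function with a measurable function with countable range is measurable. -/
lemma measurable_comp_countable' {g : ℝ → ℝ} (hg : Measurable g)
    (hcr : (Set.range g).Countable) (f : ℝ → ℝ) : Measurable (f ∘ g) := by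
  intro A _
  have : (f ∘ g) ⁻¹' A = ⋃ y ∈ (Set.range g ∩ f ⁻¹' A), g ⁻¹' {y} := by
    ext z
    simp only [Set.mem_preimage, Function.comp_apply, Set.mem_iUnion, Set.mem_inter_iff,
      Set.mem_range, Set.mem_singleton_iff, exists_prop]
    constructor
    · intro h; exact ⟨g z, ⟨⟨z, rfl⟩, h⟩, rfl⟩
    · rintro ⟨y, ⟨_, hy⟩, rfl⟩; exact hy
  rw [this]
  exact MeasurableSet.biUnion (hcr.mono Set.inter_subset_left)
    fun y _ => hg (measurableSet_singleton y)

/-- A càdlàg function, pre-composed with `max · 0`, is measurable. -/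
lemma Cadlag.measurable_comp_max {f : ℝ → ℝ} (hf : Cadlag f) :
    Measurable fun s => f (max s 0) := by
  set g : ℕ → ℝ → ℝ := fun k s => (⌈max s 0 * 2 ^ k⌉ : ℝ) / 2 ^ k with hg
  have hgmeas : ∀ k, Measurable (g k) := by
    intro k
    have h1 : Measurable fun s : ℝ => (⌈max s 0 * 2 ^ k⌉ : ℤ) :=
      Int.measurable_ceil.comp ((measurable_id.max measurable_const).mul_const _)
    have h2 : Measurable fun z : ℤ => (z : ℝ) / 2 ^ k := measurable_from_top
    exact h2.comp h1
  have hge : ∀ k s, max s 0 ≤ g k s := by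
    intro k s
    rw [hg, le_div_iff₀ (by positivity)]
    exact Int.le_ceil _
  have hgle : ∀ k s, g k s ≤ max s 0 + (1/2) ^ k := by
    intro k s
    rw [hg]
    have h2 : (⌈max s 0 * 2 ^ k⌉ : ℝ) ≤ max s 0 * 2 ^ k + 1 := (Int.ceil_lt_add_one _).le
    rw [div_le_iff₀ (by positivity)]
    calc (⌈max s 0 * 2 ^ k⌉ : ℝ) ≤ max s 0 * 2 ^ k + 1 := h2
      _ = (max s 0 + (1/2)^k) * 2 ^ k := by
          rw [add_mul]
          congr 1
          rw [div_pow, one_pow, div_mul_cancel₀]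
          positivity
  have hconv : ∀ s, Tendsto (fun k => f (g k s)) atTop (nhds (f (max s 0))) := by
    intro s
    have htend : Tendsto (fun k => g k s) atTop (nhds (max s 0)) := by
      have h0 : Tendsto (fun k : ℕ => max s 0 + (1/2) ^ k) atTop (nhds (max s 0 + 0)) :=
        tendsto_const_nhds.add (tendsto_pow_atTop_nhds_zero_of_lt_one (by norm_num) (by norm_num))
      rw [add_zero] at h0
      exact tendsto_of_tendsto_of_tendsto_of_le_of_le tendsto_const_nhds h0
        (fun k => hge k s) (fun k => hgle k s)
    have htend' : Tendsto (fun k => g k s) atTop (nhdsWithin (max s 0) (Set.Ici (max s 0))) :=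
      tendsto_nhdsWithin_iff.2 ⟨htend, Filter.Eventually.of_forall fun k => hge k s⟩
    exact (hf.1 (max s 0) (le_max_right _ _)).tendsto.comp htend'
  have hmeask : ∀ k, Measurable fun s => f (g k s) := by
    intro k
    have hcr : (Set.range (g k)).Countable := by
      have : Set.range (g k) ⊆ Set.range fun z : ℤ => (z : ℝ) / 2 ^ k := by
        rintro _ ⟨s, rfl⟩; exact ⟨⌈max s 0 * 2 ^ k⌉, rfl⟩
      exact Set.Countable.mono this (Set.countable_range _)
    exact measurable_comp_countable' (hgmeas k) hcr f
  exact measurable_of_tendsto_metrizable hmeask (tendsto_pi_nhds.2 hconv)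

/-- A function monotone on `[0,T]`, composed with the clamp to `[0,T]`, is measurable. -/
lemma measurable_clamp_of_monotoneOn {g : ℝ → ℝ} {T : ℝ} (hT : 0 ≤ T)
    (h : MonotoneOn g (Set.Icc 0 T)) :
    Measurable fun s => g (min (max s 0) T) := by
  have hmem : ∀ s : ℝ, min (max s 0) T ∈ Set.Icc (0:ℝ) T := fun s =>
    ⟨le_min (le_max_right _ _) hT, min_le_right _ _⟩
  have hmono : Monotone fun s => g (min (max s 0) T) := fun a b hab =>
    h (hmem a) (hmem b) (min_le_min (max_le_max hab le_rfl) le_rfl)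
  exact hmono.measurable
section Bounds
variable {x : ℝ → ℝ} {κ t M s : ℝ}

lemma BddOn.nonneg (h : BddOn x M t) (ht : 0 ≤ t) : 0 ≤ M :=
  le_trans (abs_nonneg _) (h 0 ⟨le_rfl, ht⟩)

lemma psiR_le_const (hκ : 0 ≤ κ) (h : BddOn x M t) (hs : s ∈ Set.Icc (0:ℝ) t) :
    psiR κ x s ≤ M := by
  refine psiR_le hs.1 fun u hu => max_le ?_ (h.nonneg (hs.1.trans hs.2))
  have := (abs_le.1 (h u ⟨hu.1, hu.2.trans hs.2⟩)).2
  linarith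

lemma abs_phiR_le (hκ : 0 ≤ κ) (h : BddOn x M t) (hs : s ∈ Set.Icc (0:ℝ) t) :
    |phiR κ x s| ≤ 2 * M := by
  have h1 := psiR_le_const hκ h hs
  have h2 : (0:ℝ) ≤ psiR κ x s := psiR_nonneg
  have h3 := abs_le.1 (h s hs)
  rw [phiR]
  refine abs_le.2 ⟨by linarith [h3.1], by linarith [h3.2]⟩

lemma abs_phiE_le (B : ℝ≥0∞) (h : BddOn x M t) (hs : s ∈ Set.Icc (0:ℝ) t) :
    |phiE B x s| ≤ 2 * M := by
  unfold phiE
  split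
  · exact (h s hs).trans (by linarith [h.nonneg (hs.1.trans hs.2)])
  · exact abs_phiR_le ENNReal.toReal_nonneg h hs

lemma intervalIntegrable_of_bddOn {g : ℝ → ℝ} (ht : 0 ≤ t)
    (hmeas : Measurable fun s => g (min (max s 0) t))
    (hM : BddOn g M t) : IntervalIntegrable g volume 0 t := by
  rw [intervalIntegrable_iff_integrableOn_Ioc_of_le ht]
  have heq : ∀ s ∈ Set.Ioc (0:ℝ) t, g (min (max s 0) t) = g s := fun s hs => by
    rw [max_eq_left hs.1.le, min_eq_left hs.2]
  refine Integrable.mono' (integrable_const M) ?_ ?_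
  · exact (hmeas.aestronglyMeasurable.restrict).congr
      ((ae_restrict_iff' measurableSet_Ioc).2 (ae_of_all _ heq))
  · refine (ae_restrict_iff' measurableSet_Ioc).2 (ae_of_all _ fun s hs => ?_)
    rw [Real.norm_eq_abs]; exact hM s (Set.Ioc_subset_Icc_self hs)

lemma Cadlag.measurable_clamp {w : ℝ → ℝ} (hw : Cadlag w) (ht : 0 ≤ t) :
    Measurable fun s => w (min (max s 0) t) := by
  have h1 : (fun s => w (min (max s 0) t)) = (fun u => w (max u 0)) ∘ fun s => min s t := by
    funext s
    simp only [Function.comp]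
    congr 1
    rw [eq_comm, max_min_distrib_right, max_eq_left ht]
  rw [h1]
  exact hw.measurable_comp_max.comp (measurable_id.min measurable_const)

lemma II_one {w₁ w₂ : ℝ → ℝ} (hw₁ : Cadlag w₁) (hw₂ : Cadlag w₂) (B : ℝ≥0∞) (ht : 0 ≤ t) :
    IntervalIntegrable (fun s => -(phiR 0 w₁ s) + phiE B w₂ s) volume 0 t := by
  obtain ⟨M₁, hM₁⟩ := hw₁.bounded ht
  obtain ⟨M₂, hM₂⟩ := hw₂.bounded ht
  refine intervalIntegrable_of_bddOn (M := 2*M₁ + 2*M₂) ht ?_ ?_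
  · have hC1 := hw₁.measurable_clamp ht
    have hC2 := hw₂.measurable_clamp ht
    have hP1 : Measurable fun s => psiR 0 w₁ (min (max s 0) t) :=
      measurable_clamp_of_monotoneOn ht (psiR_monoOn hM₁)
    have hphiE : Measurable fun s => phiE B w₂ (min (max s 0) t) := by
      unfold phiE
      split
      · exact hC2
      · have hP2 : Measurable fun s => psiR B.toReal w₂ (min (max s 0) t) :=
          measurable_clamp_of_monotoneOn ht (psiR_monoOn hM₂)
        exact hC2.sub hP2
    have : Measurable fun s => -(phiR 0 w₁ (min (max s 0) t)) + phiE B w₂ (min (max s 0) t) := by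
      unfold phiR
      exact (hC1.sub hP1).neg.add hphiE
    exact this
  · intro s hs
    calc |(-(phiR 0 w₁ s) + phiE B w₂ s)| ≤ |phiR 0 w₁ s| + |phiE B w₂ s| := by
          rw [← abs_neg (phiR 0 w₁ s)] ; exact abs_add_le _ _
      _ ≤ 2*M₁ + 2*M₂ := add_le_add (abs_phiR_le le_rfl hM₁ hs) (abs_phiE_le B hM₂ hs)

lemma II_two {w₂ : ℝ → ℝ} (hw₂ : Cadlag w₂) (B : ℝ≥0∞) (ht : 0 ≤ t) :
    IntervalIntegrable (fun s => -(phiE B w₂ s)) volume 0 t := by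
  obtain ⟨M₂, hM₂⟩ := hw₂.bounded ht
  refine intervalIntegrable_of_bddOn (M := 2*M₂) ht ?_ ?_
  · have hC2 := hw₂.measurable_clamp ht
    have hphiE : Measurable fun s => phiE B w₂ (min (max s 0) t) := by
      unfold phiE
      split
      · exact hC2
      · have hP2 : Measurable fun s => psiR B.toReal w₂ (min (max s 0) t) :=
          measurable_clamp_of_monotoneOn ht (psiR_monoOn hM₂)
        exact hC2.sub hP2
    exact hphiE.neg
  · intro s hs
    rw [abs_neg]
    exact abs_phiE_le B hM₂ hs

end Bounds

section Gronwall

lemma gronwall {f : ℝ → ℝ} {A K T : ℝ} (hT : 0 ≤ T) (hK : 0 < K) (hA : 0 ≤ A)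
    (hmono : MonotoneOn f (Set.Icc 0 T)) (hf0 : 0 ≤ f 0)
    (h : ∀ t ∈ Set.Icc (0:ℝ) T, f t ≤ A + ∫ s in (0:ℝ)..t, K * f s) :
    ∀ t ∈ Set.Icc (0:ℝ) T, f t ≤ A * Real.exp (K * t) := by
  set M := f T with hMdef
  have hMt : ∀ t ∈ Set.Icc (0:ℝ) T, f t ≤ M := fun t ht => hmono ht ⟨hT, le_rfl⟩ ht.2
  have hM0 : 0 ≤ M := hf0.trans (hmono ⟨le_rfl, hT⟩ ⟨hT, le_rfl⟩ hT)
  have hint : ∀ t ∈ Set.Icc (0:ℝ) T, IntervalIntegrable (fun s => K * f s) volume 0 t := by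
    intro t ht
    have : MonotoneOn f (Set.uIcc 0 t) := by
      rw [Set.uIcc_of_le ht.1]
      exact hmono.mono (Set.Icc_subset_Icc le_rfl ht.2)
    exact this.intervalIntegrable.const_mul K
  have key : ∀ m : ℕ, ∀ t ∈ Set.Icc (0:ℝ) T,
      f t ≤ A * Real.exp (K*t) + M * (K*t)^m / (m.factorial : ℝ) := by
    intro m
    induction m with
    | zero =>
      intro t ht
      simp only [pow_zero, Nat.factorial_zero, Nat.cast_one, mul_one, div_one]
      have := Real.exp_pos (K*t)
      nlinarith [hMt t ht]
    | succ m ih =>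
      intro t ht
      have h1 := h t ht
      have hcont : Continuous fun s => K * (A * Real.exp (K*s) + M*(K*s)^m / (m.factorial : ℝ)) := by
        fun_prop
      have h2 : (∫ s in (0:ℝ)..t, K * f s)
          ≤ ∫ s in (0:ℝ)..t, K * (A*Real.exp (K*s) + M*(K*s)^m/(m.factorial : ℝ)) := by
        refine intervalIntegral.integral_mono_on ht.1 (hint t ht)
          (hcont.intervalIntegrable _ _) fun s hs => ?_
        exact mul_le_mul_of_nonneg_left (ih s ⟨hs.1, hs.2.trans ht.2⟩) hK.le
      have hftc : (∫ s in (0:ℝ)..t, K * (A*Real.exp (K*s) + M*(K*s)^m/(m.factorial : ℝ)))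
          = (A * Real.exp (K*t) + M*(K*t)^(m+1)/((m+1).factorial : ℝ))
            - (A * Real.exp (K*0) + M*(K*0)^(m+1)/((m+1).factorial : ℝ)) := by
        refine intervalIntegral.integral_eq_sub_of_hasDerivAt
          (f := fun u => A * Real.exp (K*u) + M*(K*u)^(m+1)/((m+1).factorial : ℝ))
          (f' := fun s => K * (A*Real.exp (K*s) + M*(K*s)^m/(m.factorial : ℝ)))
          (fun s hs => ?_) (hcont.intervalIntegrable _ _)
        have d1 : HasDerivAt (fun u : ℝ => K*u) K s := by
          simpa using (hasDerivAt_id s).const_mul K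
        have d2 : HasDerivAt (fun u => Real.exp (K*u)) (Real.exp (K*s) * K) s :=
          (Real.hasDerivAt_exp (K*s)).comp s d1
        have d3 : HasDerivAt (fun u : ℝ => (K*u)^(m+1)) ((m+1 : ℕ) * (K*s)^m * K) s := by
          exact_mod_cast d1.pow (m+1)
        have := (d2.const_mul A).add ((d3.const_mul M).div_const (((m+1).factorial : ℝ)))
        convert this using 1
        · rfl
        have hfac : (((m+1).factorial : ℝ)) = (m+1) * (m.factorial : ℝ) := by
          push_cast [Nat.factorial_succ]; ring
        rw [hfac]
        have hfm : (m.factorial : ℝ) ≠ 0 := Nat.cast_ne_zero.2 m.factorial_ne_zero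
        push_cast
        field_simp
      have hzero : A * Real.exp (K*0) + M*(K*0)^(m+1)/((m+1).factorial : ℝ) = A := by
        simp [Real.exp_zero]
      rw [hftc, hzero] at h2
      linarith
  intro t ht
  have hlim : Tendsto (fun m : ℕ => A*Real.exp (K*t) + M*(K*t)^m/(m.factorial : ℝ))
      atTop (nhds (A*Real.exp (K*t))) := by
    have h0 : Tendsto (fun m : ℕ => M*((K*t)^m/(m.factorial : ℝ))) atTop (nhds (M * 0)) :=
      (FloorSemiring.tendsto_pow_div_factorial_atTop (K*t)).const_mul M
    rw [mul_zero] at h0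
    have h1 : Tendsto (fun m : ℕ => A*Real.exp (K*t) + M*((K*t)^m/(m.factorial : ℝ)))
        atTop (nhds (A*Real.exp (K*t) + 0)) := tendsto_const_nhds.add h0
    rw [add_zero] at h1
    simpa [mul_div_assoc] using h1
  exact ge_of_tendsto' hlim fun m => key m t ht

end Gronwall

section Core
variable {x x' : ℝ → ℝ} {κ t T M M' s : ℝ}

lemma abs_phiR_sub_phiR (ht : 0 ≤ t) (hx : BddOn x M t) (hx' : BddOn x' M' t)
    (hs : s ∈ Set.Icc (0:ℝ) t) :
    |phiR κ x s - phiR κ x' s| ≤ 2 * unif (fun u => x u - x' u) t := by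
  have hd : BddOn (fun u => x u - x' u) (M + M') t := fun u hu =>
    (abs_sub _ _).trans (add_le_add (hx u hu) (hx' u hu))
  have h1 : |x s - x' s| ≤ unif (fun u => x u - x' u) t := le_unif hd hs
  have h2 : |psiR κ x s - psiR κ x' s| ≤ unif (fun u => x u - x' u) t :=
    (abs_psiR_sub_psiR hs.1 (hx.mono hs.2) (hx'.mono hs.2)).trans
      (unif_monoOn hd ⟨hs.1, hs.2⟩ ⟨ht, le_rfl⟩ hs.2)
  calc |phiR κ x s - phiR κ x' s| = |(x s - x' s) - (psiR κ x s - psiR κ x' s)| := by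
        rw [phiR, phiR]; ring_nf
    _ ≤ |x s - x' s| + |psiR κ x s - psiR κ x' s| := abs_sub _ _
    _ ≤ 2 * unif (fun u => x u - x' u) t := by linarith

lemma psiE_le_const (h : BddOn x M t) (hs : s ∈ Set.Icc (0:ℝ) t) (κ : ℝ≥0∞) :
    psiE κ x s ≤ M := by
  unfold psiE; split
  · simpa using h.nonneg (hs.1.trans hs.2)
  · exact psiR_le_const ENNReal.toReal_nonneg h hs

/-- The key stability estimate for the auxiliary system. -/
lemma core_estimate {B B' : ℝ≥0∞} {b₁ b₂ b₁' b₂' : ℝ} {y₁ y₂ y₁' y₂' w₁ w₂ w₁' w₂' : ℝ → ℝ}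
    (hsol : IsAuxSolution B b₁ b₂ y₁ y₂ w₁ w₂)
    (hsol' : IsAuxSolution B' b₁' b₂' y₁' y₂' w₁' w₂')
    {T : ℝ} (hT : 0 ≤ T)
    (hby₁ : ∃ M, BddOn (fun s => y₁' s - y₁ s) M T)
    (hby₂ : ∃ M, BddOn (fun s => y₂' s - y₂ s) M T) :
    unif (fun s => w₁' s - w₁ s) T ≤
      (3*(|b₁' - b₁| + unif (fun s => y₁' s - y₁ s) T)
        + (|b₂' - b₂| + unif (fun s => y₂' s - y₂ s) T)
        + 4 * unif (fun s => psiE B' w₂ s - psiE B w₂ s) T * T) * Real.exp (8*T) ∧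
    unif (fun s => w₂' s - w₂ s) T ≤
      (3*(|b₁' - b₁| + unif (fun s => y₁' s - y₁ s) T)
        + (|b₂' - b₂| + unif (fun s => y₂' s - y₂ s) T)
        + 4 * unif (fun s => psiE B' w₂ s - psiE B w₂ s) T * T) * Real.exp (8*T) := by
  obtain ⟨Mw₁, hMw₁⟩ := hsol.1.bounded hT
  obtain ⟨Mw₂, hMw₂⟩ := hsol.2.1.bounded hT
  obtain ⟨Mw₁', hMw₁'⟩ := hsol'.1.bounded hT
  obtain ⟨Mw₂', hMw₂'⟩ := hsol'.2.1.bounded hT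
  obtain ⟨My₁, hby₁⟩ := hby₁
  obtain ⟨My₂, hby₂⟩ := hby₂
  have hMw₁ : BddOn w₁ Mw₁ T := hMw₁
  have hMw₂ : BddOn w₂ Mw₂ T := hMw₂
  have hMw₁' : BddOn w₁' Mw₁' T := hMw₁'
  have hMw₂' : BddOn w₂' Mw₂' T := hMw₂'
  have hby₁ : BddOn (fun s => y₁' s - y₁ s) My₁ T := hby₁
  have hby₂ : BddOn (fun s => y₂' s - y₂ s) My₂ T := hby₂
  set Δ₁ : ℝ → ℝ := fun s => w₁' s - w₁ s with hΔ₁def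
  set Δ₂ : ℝ → ℝ := fun s => w₂' s - w₂ s with hΔ₂def
  have hbΔ₁ : BddOn Δ₁ (Mw₁' + Mw₁) T := fun u hu =>
    (abs_sub _ _).trans (add_le_add (hMw₁' u hu) (hMw₁ u hu))
  have hbΔ₂ : BddOn Δ₂ (Mw₂' + Mw₂) T := fun u hu =>
    (abs_sub _ _).trans (add_le_add (hMw₂' u hu) (hMw₂ u hu))
  set F₁ : ℝ → ℝ := fun t => unif Δ₁ t with hF₁def
  set F₂ : ℝ → ℝ := fun t => unif Δ₂ t with hF₂def
  set f : ℝ → ℝ := fun t => 2 * F₁ t + F₂ t with hfdef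
  set c : ℝ := unif (fun s => psiE B' w₂ s - psiE B w₂ s) T with hcdef
  have hc0 : 0 ≤ c := unif_nonneg
  have habs_psiE : ∀ (κ : ℝ≥0∞), ∀ u ∈ Set.Icc (0:ℝ) T, |psiE κ w₂ u| ≤ Mw₂ := by
    intro κ u hu
    have h1 : (0:ℝ) ≤ psiE κ w₂ u := psiE_nonneg κ
    have h2 := psiE_le_const hMw₂ hu κ
    rw [abs_of_nonneg h1]; exact h2
  have hbpsiE : BddOn (fun s => psiE B' w₂ s - psiE B w₂ s) (Mw₂ + Mw₂) T := fun u hu =>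
    (abs_sub _ _).trans (add_le_add (habs_psiE B' u hu) (habs_psiE B u hu))
  have hcs : ∀ u ∈ Set.Icc (0:ℝ) T, |psiE B' w₂ u - psiE B w₂ u| ≤ c := fun u hu =>
    le_unif hbpsiE hu
  set a₁ : ℝ := |b₁' - b₁| + unif (fun s => y₁' s - y₁ s) T with ha₁def
  set a₂ : ℝ := |b₂' - b₂| + unif (fun s => y₂' s - y₂ s) T with ha₂def
  have ha₁0 : 0 ≤ a₁ := add_nonneg (abs_nonneg _) unif_nonneg
  have ha₂0 : 0 ≤ a₂ := add_nonneg (abs_nonneg _) unif_nonneg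
  set G : ℝ → ℝ := fun s => 2 * F₁ s + 2 * F₂ s + c with hGdef
  have hF₁mono : MonotoneOn F₁ (Set.Icc 0 T) := unif_monoOn hbΔ₁
  have hF₂mono : MonotoneOn F₂ (Set.Icc 0 T) := unif_monoOn hbΔ₂
  have hGmono : MonotoneOn G (Set.Icc 0 T) := fun u hu v hv huv => by
    have := hF₁mono hu hv huv; have := hF₂mono hu hv huv
    simp only [hGdef]; linarith
  have hGint : ∀ t ∈ Set.Icc (0:ℝ) T, IntervalIntegrable G volume 0 t := by
    intro t ht
    have : MonotoneOn G (Set.uIcc 0 t) := by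
      rw [Set.uIcc_of_le ht.1]; exact hGmono.mono (Set.Icc_subset_Icc le_rfl ht.2)
    exact this.intervalIntegrable
  have hGnn : ∀ s, 0 ≤ G s := fun s => by
    have h1 : (0:ℝ) ≤ F₁ s := unif_nonneg
    have h2 : (0:ℝ) ≤ F₂ s := unif_nonneg
    simp only [hGdef]; linarith
  -- pointwise bound on the difference of the first integrands
  have hu₁ : ∀ u ∈ Set.Icc (0:ℝ) T,
      |(-(phiR 0 w₁' u) + phiE B' w₂' u) - (-(phiR 0 w₁ u) + phiE B w₂ u)| ≤ G u := by
    intro u hu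
    have hA : |phiR 0 w₁' u - phiR 0 w₁ u| ≤ 2 * F₁ u :=
      abs_phiR_sub_phiR hu.1 (hMw₁'.mono hu.2) (hMw₁.mono hu.2) ⟨hu.1, le_rfl⟩
    have hB1 : |phiE B' w₂' u - phiE B' w₂ u| ≤ 2 * F₂ u :=
      abs_phiE_sub_phiE hu.1 (hMw₂'.mono hu.2) (hMw₂.mono hu.2) B' ⟨hu.1, le_rfl⟩
    have hB2 : |phiE B' w₂ u - phiE B w₂ u| ≤ c := by
      rw [phiE_eq, phiE_eq]
      have : w₂ u - psiE B' w₂ u - (w₂ u - psiE B w₂ u) = -(psiE B' w₂ u - psiE B w₂ u) := by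
        ring
      rw [this, abs_neg]; exact hcs u hu
    calc |(-(phiR 0 w₁' u) + phiE B' w₂' u) - (-(phiR 0 w₁ u) + phiE B w₂ u)|
        = |-(phiR 0 w₁' u - phiR 0 w₁ u) + ((phiE B' w₂' u - phiE B' w₂ u)
            + (phiE B' w₂ u - phiE B w₂ u))| := by ring_nf
      _ ≤ |-(phiR 0 w₁' u - phiR 0 w₁ u)| + |(phiE B' w₂' u - phiE B' w₂ u)
            + (phiE B' w₂ u - phiE B w₂ u)| := abs_add_le _ _
      _ ≤ |phiR 0 w₁' u - phiR 0 w₁ u| + (|phiE B' w₂' u - phiE B' w₂ u|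
            + |phiE B' w₂ u - phiE B w₂ u|) := by
          rw [abs_neg]; exact add_le_add le_rfl (abs_add_le _ _)
      _ ≤ G u := by simp only [hGdef]; linarith
  have hu₂ : ∀ u ∈ Set.Icc (0:ℝ) T,
      |(-(phiE B' w₂' u)) - (-(phiE B w₂ u))| ≤ G u := by
    intro u hu
    have hB1 : |phiE B' w₂' u - phiE B' w₂ u| ≤ 2 * F₂ u :=
      abs_phiE_sub_phiE hu.1 (hMw₂'.mono hu.2) (hMw₂.mono hu.2) B' ⟨hu.1, le_rfl⟩
    have hB2 : |phiE B' w₂ u - phiE B w₂ u| ≤ c := by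
      rw [phiE_eq, phiE_eq]
      have : w₂ u - psiE B' w₂ u - (w₂ u - psiE B w₂ u) = -(psiE B' w₂ u - psiE B w₂ u) := by
        ring
      rw [this, abs_neg]; exact hcs u hu
    have h1 : (0:ℝ) ≤ F₁ u := unif_nonneg
    calc |(-(phiE B' w₂' u)) - (-(phiE B w₂ u))|
        = |(phiE B' w₂' u - phiE B' w₂ u) + (phiE B' w₂ u - phiE B w₂ u)| := by
          rw [← abs_neg]; congr 1; ring
      _ ≤ |phiE B' w₂' u - phiE B' w₂ u| + |phiE B' w₂ u - phiE B w₂ u| := abs_add_le _ _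
      _ ≤ G u := by simp only [hGdef]; linarith
  -- the integral of G over [0,s] is at most that over [0,t]
  have hGmonoInt : ∀ s t, s ∈ Set.Icc (0:ℝ) t → t ∈ Set.Icc (0:ℝ) T →
      (∫ u in (0:ℝ)..s, G u) ≤ ∫ u in (0:ℝ)..t, G u := by
    intro s t hs ht
    refine intervalIntegral.integral_mono_interval le_rfl hs.1 hs.2 ?_ (hGint t ht)
    exact (ae_restrict_iff' measurableSet_Ioc).2 (ae_of_all _ fun u _ => hGnn u)
  -- first basic inequality
  have h1 : ∀ t ∈ Set.Icc (0:ℝ) T, F₁ t ≤ a₁ + ∫ u in (0:ℝ)..t, G u := by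
    intro t ht
    refine unif_le ht.1 fun s hs => ?_
    have hsT : s ∈ Set.Icc (0:ℝ) T := ⟨hs.1, hs.2.trans ht.2⟩
    have he' := hsol'.2.2.1 s hs.1
    have he := hsol.2.2.1 s hs.1
    have hint' := II_one hsol'.1 hsol'.2.1 B' hs.1
    have hint := II_one hsol.1 hsol.2.1 B hs.1
    have hdiff : Δ₁ s = (b₁' - b₁) + (y₁' s - y₁ s)
        + ∫ u in (0:ℝ)..s, ((-(phiR 0 w₁' u) + phiE B' w₂' u) - (-(phiR 0 w₁ u) + phiE B w₂ u)) := by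
      simp only [hΔ₁def]
      rw [he', he, intervalIntegral.integral_sub hint' hint]
      ring
    have habs : |∫ u in (0:ℝ)..s, ((-(phiR 0 w₁' u) + phiE B' w₂' u) - (-(phiR 0 w₁ u) + phiE B w₂ u))|
        ≤ ∫ u in (0:ℝ)..s, G u := by
      refine (intervalIntegral.abs_integral_le_integral_abs hs.1).trans ?_
      refine intervalIntegral.integral_mono_on hs.1 (hint'.sub hint).abs
        (hGint s hsT) fun u hu => ?_
      exact hu₁ u ⟨hu.1, hu.2.trans hsT.2⟩
    calc |Δ₁ s| ≤ |b₁' - b₁| + |y₁' s - y₁ s|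
          + |∫ u in (0:ℝ)..s, ((-(phiR 0 w₁' u) + phiE B' w₂' u) - (-(phiR 0 w₁ u) + phiE B w₂ u))| := by
          rw [hdiff]; exact (abs_add_le _ _).trans (add_le_add (abs_add_le _ _) le_rfl)
      _ ≤ |b₁' - b₁| + unif (fun s => y₁' s - y₁ s) T + ∫ u in (0:ℝ)..s, G u :=
          add_le_add (add_le_add le_rfl (le_unif hby₁ hsT)) habs
      _ ≤ a₁ + ∫ u in (0:ℝ)..t, G u := by
          rw [ha₁def]; exact add_le_add le_rfl (hGmonoInt s t hs ht)
  -- second basic inequality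
  have h2 : ∀ t ∈ Set.Icc (0:ℝ) T, F₂ t ≤ a₂ + F₁ t + ∫ u in (0:ℝ)..t, G u := by
    intro t ht
    refine unif_le ht.1 fun s hs => ?_
    have hsT : s ∈ Set.Icc (0:ℝ) T := ⟨hs.1, hs.2.trans ht.2⟩
    have he' := hsol'.2.2.2.1 s hs.1
    have he := hsol.2.2.2.1 s hs.1
    have hint' := II_two hsol'.2.1 B' hs.1
    have hint := II_two hsol.2.1 B hs.1
    have hdiff : Δ₂ s = (b₂' - b₂) + (y₂' s - y₂ s) + (psiR 0 w₁' s - psiR 0 w₁ s)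
        + ∫ u in (0:ℝ)..s, ((-(phiE B' w₂' u)) - (-(phiE B w₂ u))) := by
      simp only [hΔ₂def]
      rw [he', he, intervalIntegral.integral_sub hint' hint]
      ring
    have hpsi : |psiR 0 w₁' s - psiR 0 w₁ s| ≤ F₁ t := by
      refine (abs_psiR_sub_psiR hs.1 (hMw₁'.mono hsT.2) (hMw₁.mono hsT.2)).trans ?_
      exact unif_monoOn hbΔ₁ hsT ht hs.2
    have habs : |∫ u in (0:ℝ)..s, ((-(phiE B' w₂' u)) - (-(phiE B w₂ u)))|
        ≤ ∫ u in (0:ℝ)..s, G u := by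
      refine (intervalIntegral.abs_integral_le_integral_abs hs.1).trans ?_
      refine intervalIntegral.integral_mono_on hs.1 (hint'.sub hint).abs
        (hGint s hsT) fun u hu => ?_
      exact hu₂ u ⟨hu.1, hu.2.trans hsT.2⟩
    calc |Δ₂ s| ≤ (|b₂' - b₂| + |y₂' s - y₂ s| + |psiR 0 w₁' s - psiR 0 w₁ s|)
          + |∫ u in (0:ℝ)..s, ((-(phiE B' w₂' u)) - (-(phiE B w₂ u)))| := by
          rw [hdiff]
          exact (abs_add_le _ _).trans (add_le_add ((abs_add_le _ _).trans
            (add_le_add (abs_add_le _ _) le_rfl)) le_rfl)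
      _ ≤ (|b₂' - b₂| + unif (fun s => y₂' s - y₂ s) T + F₁ t) + ∫ u in (0:ℝ)..s, G u :=
          add_le_add (add_le_add (add_le_add le_rfl (le_unif hby₂ hsT)) hpsi) habs
      _ ≤ a₂ + F₁ t + ∫ u in (0:ℝ)..t, G u := by
          rw [ha₂def]; exact add_le_add le_rfl (hGmonoInt s t hs ht)
  -- combined Gronwall-type inequality
  have hfint : ∀ t ∈ Set.Icc (0:ℝ) T, IntervalIntegrable f volume 0 t := by
    intro t ht
    have hfm : MonotoneOn f (Set.uIcc 0 t) := by
      rw [Set.uIcc_of_le ht.1]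
      intro u hu v hv huv
      have := hF₁mono (Set.Icc_subset_Icc le_rfl ht.2 hu) (Set.Icc_subset_Icc le_rfl ht.2 hv) huv
      have := hF₂mono (Set.Icc_subset_Icc le_rfl ht.2 hu) (Set.Icc_subset_Icc le_rfl ht.2 hv) huv
      simp only [hfdef]; linarith
    exact hfm.intervalIntegrable
  have hGle : ∀ s, G s ≤ 2 * f s + c := fun s => by
    have h1 : (0:ℝ) ≤ F₁ s := unif_nonneg
    simp only [hGdef, hfdef]; linarith
  have hkey : ∀ t ∈ Set.Icc (0:ℝ) T,
      f t ≤ (3*a₁ + a₂ + 4*c*T) + ∫ s in (0:ℝ)..t, 8 * f s := by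
    intro t ht
    have hG := hGint t ht
    have hf := hfint t ht
    have hIG : (∫ u in (0:ℝ)..t, G u) ≤ ∫ u in (0:ℝ)..t, (2 * f u + c) := by
      refine intervalIntegral.integral_mono_on ht.1 hG
        ((hf.const_mul 2).add (intervalIntegrable_const)) fun u _ => hGle u
    have hsplit : (∫ u in (0:ℝ)..t, (2 * f u + c))
        = 2 * (∫ u in (0:ℝ)..t, f u) + c * t := by
      rw [intervalIntegral.integral_add (hf.const_mul 2) intervalIntegrable_const,
        intervalIntegral.integral_const_mul, intervalIntegral.integral_const]
      simp [smul_eq_mul]; ring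
    have h8 : (∫ s in (0:ℝ)..t, 8 * f s) = 8 * ∫ s in (0:ℝ)..t, f s :=
      intervalIntegral.integral_const_mul _ _
    have hInn : 0 ≤ ∫ u in (0:ℝ)..t, f u := by
      rw [intervalIntegral.integral_of_le ht.1]
      refine setIntegral_nonneg measurableSet_Ioc fun u _ => ?_
      have h1 : (0:ℝ) ≤ F₁ u := unif_nonneg
      have h2 : (0:ℝ) ≤ F₂ u := unif_nonneg
      simp only [hfdef]; linarith
    have hct : c * t ≤ c * T := mul_le_mul_of_nonneg_left ht.2 hc0
    have e1 := h1 t ht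
    have e2 := h2 t ht
    have e1' := h1 t ht
    -- f t = 2 F₁ t + F₂ t ≤ 2(a₁+∫G) + (a₂ + F₁ t + ∫G) ≤ 3a₁+a₂+4∫G
    have : f t ≤ 3*a₁ + a₂ + 4 * ∫ u in (0:ℝ)..t, G u := by
      simp only [hfdef]; linarith
    calc f t ≤ 3*a₁ + a₂ + 4 * ∫ u in (0:ℝ)..t, G u := this
      _ ≤ 3*a₁ + a₂ + 4 * (2 * (∫ u in (0:ℝ)..t, f u) + c * t) := by
          rw [← hsplit]; linarith
      _ ≤ (3*a₁ + a₂ + 4*c*T) + ∫ s in (0:ℝ)..t, 8 * f s := by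
          rw [h8]; linarith
  have hfmono : MonotoneOn f (Set.Icc 0 T) := fun u hu v hv huv => by
    have := hF₁mono hu hv huv; have := hF₂mono hu hv huv
    simp only [hfdef]; linarith
  have hf0 : 0 ≤ f 0 := by
    have h1 : (0:ℝ) ≤ F₁ 0 := unif_nonneg
    have h2 : (0:ℝ) ≤ F₂ 0 := unif_nonneg
    simp only [hfdef]; linarith
  have hA0 : 0 ≤ 3*a₁ + a₂ + 4*c*T := by positivity
  have hgr := gronwall hT (by norm_num : (0:ℝ) < 8) hA0 hfmono hf0 hkey T ⟨hT, le_rfl⟩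
  have hF₁f : F₁ T ≤ f T := by
    have h2 : (0:ℝ) ≤ F₂ T := unif_nonneg
    have h1 : (0:ℝ) ≤ F₁ T := unif_nonneg
    simp only [hfdef]; linarith
  have hF₂f : F₂ T ≤ f T := by
    have h1 : (0:ℝ) ≤ F₁ T := unif_nonneg
    simp only [hfdef]; linarith
  exact ⟨hF₁f.trans hgr, hF₂f.trans hgr⟩

end Core

section CLimit

lemma tendsto_unif_psiE {w₂ : ℝ → ℝ} (hw₂ : Cadlag w₂) {T : ℝ} (hT : 0 ≤ T)
    {Bs : ℕ → ℝ≥0∞} {B : ℝ≥0∞} (hB : Tendsto Bs atTop (nhds B)) :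
    Tendsto (fun n => unif (fun s => psiE (Bs n) w₂ s - psiE B w₂ s) T) atTop (nhds 0) := by
  obtain ⟨M, hM⟩ := hw₂.bounded hT
  have hM : BddOn w₂ M T := hM
  have hM0 : 0 ≤ M := hM.nonneg hT
  by_cases hBtop : B = ⊤
  · subst hBtop
    have hev : ∀ᶠ n in atTop, Bs n ∈ Set.Ioi (ENNReal.ofReal M) :=
      hB (Ioi_mem_nhds ENNReal.ofReal_lt_top)
    have hzero : ∀ n, Bs n ∈ Set.Ioi (ENNReal.ofReal M) →
        unif (fun s => psiE (Bs n) w₂ s - psiE ⊤ w₂ s) T = 0 := by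
      intro n hn
      have hpsiz : ∀ s ∈ Set.Icc (0:ℝ) T, psiE (Bs n) w₂ s = 0 := by
        intro s hs
        unfold psiE
        split
        · rfl
        · rename_i hne
          refine le_antisymm (psiR_le hs.1 fun u hu => ?_) psiR_nonneg
          have hlt : M < (Bs n).toReal := by
            have := (ENNReal.toReal_lt_toReal ENNReal.ofReal_ne_top hne).2 hn
            rwa [ENNReal.toReal_ofReal hM0] at this
          have hle : w₂ u ≤ M := (le_abs_self _).trans (hM u ⟨hu.1, hu.2.trans hs.2⟩)
          exact max_le (by linarith) le_rfl
      refine le_antisymm (unif_le hT fun s hs => ?_) unif_nonneg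
      rw [hpsiz s hs]
      simp [psiE]
    refine tendsto_const_nhds.congr' ?_
    filter_upwards [hev] with n hn
    exact (hzero n hn).symm
  · have htR : Tendsto (fun n => (Bs n).toReal) atTop (nhds B.toReal) :=
      (ENNReal.tendsto_toReal hBtop).comp hB
    have hev : ∀ᶠ n in atTop, Bs n ≠ ⊤ := by
      filter_upwards [hB (Iio_mem_nhds (lt_top_iff_ne_top.2 hBtop))] with n hn
      exact LT.lt.ne hn
    have hkey : ∀ n, Bs n ≠ ⊤ →
        unif (fun s => psiE (Bs n) w₂ s - psiE B w₂ s) T ≤ |(Bs n).toReal - B.toReal| := by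
      intro n hn
      refine unif_le hT fun s hs => ?_
      have e1 : psiE (Bs n) w₂ s = psiR (Bs n).toReal w₂ s := by simp [psiE, hn]
      have e2 : psiE B w₂ s = psiR B.toReal w₂ s := by simp [psiE, hBtop]
      rw [e1, e2]
      exact abs_psiR_sub_psiR_kappa hs.1 (hM.mono hs.2)
    have hgl : Tendsto (fun n => |(Bs n).toReal - B.toReal|) atTop (nhds 0) := by
      have h0 : Tendsto (fun n => (Bs n).toReal - B.toReal) atTop
          (nhds (B.toReal - B.toReal)) := htR.sub tendsto_const_nhds
      rw [sub_self] at h0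
      simpa using h0.abs
    refine squeeze_zero' (Filter.Eventually.of_forall fun n => unif_nonneg) ?_ hgl
    filter_upwards [hev] with n hn
    exact hkey n hn

end CLimit

section Continuity

/-- Continuity of the running supremum of a continuous function. -/
lemma continuousOn_psiR {x : ℝ → ℝ} {κ : ℝ} (hx : ContinuousOn x (Set.Ici 0)) :
    ContinuousOn (psiR κ x) (Set.Ici 0) := by
  intro t₀ ht₀
  set T : ℝ := t₀ + 1 with hTdef
  have hT : 0 ≤ T := by simp only [hTdef]; linarith [ht₀.out]
  have ht₀T : t₀ ∈ Set.Icc (0:ℝ) T := ⟨ht₀, by simp [hTdef]⟩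
  have hxc : ContinuousOn x (Set.Icc 0 T) := hx.mono (fun u hu => hu.1)
  obtain ⟨C, hC⟩ := isCompact_Icc.exists_bound_of_continuousOn hxc
  have hBdd : BddOn x C T := fun u hu => by
    simpa [Real.norm_eq_abs] using hC u hu
  have hUC := isCompact_Icc.uniformContinuousOn_of_continuous hxc
  rw [Metric.continuousWithinAt_iff]
  intro ε hε
  obtain ⟨δ, hδ, hδ'⟩ := (Metric.uniformContinuousOn_iff.1 hUC) (ε/2) (by linarith)
  refine ⟨min δ 1, by positivity, fun {t'} ht' hdist => ?_⟩
  have ht'0 : (0:ℝ) ≤ t' := ht'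
  have hd1 : |t' - t₀| < 1 := lt_of_lt_of_le (by simpa [Real.dist_eq] using hdist) (min_le_right _ _)
  have hdδ : |t' - t₀| < δ := lt_of_lt_of_le (by simpa [Real.dist_eq] using hdist) (min_le_left _ _)
  have ht'T : t' ∈ Set.Icc (0:ℝ) T := ⟨ht'0, by
    have := abs_lt.1 hd1
    simp only [hTdef]; linarith [this.2]⟩
  -- main claim : for 0 ≤ u ≤ v ≤ T with v - u < δ, psiR κ x v ≤ psiR κ x u + ε/2
  have claim : ∀ u v : ℝ, u ∈ Set.Icc (0:ℝ) T → v ∈ Set.Icc (0:ℝ) T → u ≤ v → v - u < δ →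
      psiR κ x v ≤ psiR κ x u + ε/2 := by
    intro u v hu hv huv hvu
    refine psiR_le (hu.1.trans huv) fun s hs => ?_
    rcases le_or_gt s u with hsu | hsu
    · have h1 : max (x s - κ) 0 ≤ psiR κ x u := le_psiR (hBdd.mono hu.2) ⟨hs.1, hsu⟩
      linarith
    · have hsT : s ∈ Set.Icc (0:ℝ) T := ⟨hs.1, hs.2.trans hv.2⟩
      have hds : dist s u < δ := by
        rw [Real.dist_eq, abs_of_nonneg (by linarith [hsu.le] : (0:ℝ) ≤ s - u)]
        linarith [hs.2]
      have hxd : dist (x s) (x u) < ε/2 := hδ' s hsT u hu hds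
      have h2 : max (x s - κ) 0 ≤ max (x u - κ) 0 + ε/2 := by
        have h3 := abs_max_sub_max_le_abs (x s - κ) (x u - κ) 0
        have h4 : |x s - κ - (x u - κ)| = |x s - x u| := by congr 1; ring
        rw [h4] at h3
        have h6 := (abs_le.1 h3).2
        rw [Real.dist_eq] at hxd
        linarith
      have h5 : max (x u - κ) 0 ≤ psiR κ x u := le_psiR (hBdd.mono hu.2) ⟨hu.1, le_rfl⟩
      linarith
  have hmono := psiR_monoOn (κ := κ) hBdd
  rw [Real.dist_eq]
  rcases le_total t' t₀ with h | h
  · have hle : psiR κ x t' ≤ psiR κ x t₀ := hmono ht'T ht₀T h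
    have hge := claim t' t₀ ht'T ht₀T h (by
      rw [abs_sub_comm] at hdδ
      linarith [(abs_lt.1 hdδ).2])
    have habs : |psiR κ x t' - psiR κ x t₀| ≤ ε/2 := abs_le.2 ⟨by linarith, by linarith⟩
    linarith
  · have hle : psiR κ x t₀ ≤ psiR κ x t' := hmono ht₀T ht'T h
    have hge := claim t₀ t' ht₀T ht'T h (by linarith [(abs_lt.1 hdδ).2])
    have habs : |psiR κ x t' - psiR κ x t₀| ≤ ε/2 := abs_le.2 ⟨by linarith, by linarith⟩
    linarith

end Continuity

section Primitive

lemma contOn_primitive {u : ℝ → ℝ} {T M : ℝ} (hT : 0 ≤ T)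
    (hmeas : Measurable fun s => u (min (max s 0) T))
    (hM : BddOn u M T) :
    ContinuousOn (fun t => ∫ s in (0:ℝ)..t, u s) (Set.Icc 0 T) := by
  have hclampmem : ∀ s : ℝ, min (max s 0) T ∈ Set.Icc (0:ℝ) T := fun s =>
    ⟨le_min (le_max_right _ _) hT, min_le_right _ _⟩
  have hMc : ∀ s : ℝ, |u (min (max s 0) T)| ≤ M := fun s => hM _ (hclampmem s)
  have hint : ∀ a b : ℝ, IntervalIntegrable (fun s => u (min (max s 0) T)) volume a b := by
    intro a b
    rw [intervalIntegrable_iff]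
    refine Integrable.mono' (intervalIntegrable_iff.1 (intervalIntegrable_const (c := M)))
      hmeas.aestronglyMeasurable.restrict (ae_of_all _ fun s => ?_)
    rw [Real.norm_eq_abs]; exact hMc s
  have hprim : Continuous fun t => ∫ s in (0:ℝ)..t, u (min (max s 0) T) :=
    intervalIntegral.continuous_primitive hint 0
  refine hprim.continuousOn.congr fun t ht => ?_
  refine intervalIntegral.integral_congr fun s hs => ?_
  rw [Set.uIcc_of_le ht.1] at hs
  rw [max_eq_left hs.1, min_eq_left (hs.2.trans ht.2)]

lemma meas_clamp_one {w₁ w₂ : ℝ → ℝ} (hw₁ : Cadlag w₁) (hw₂ : Cadlag w₂) (B : ℝ≥0∞)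
    {T : ℝ} (hT : 0 ≤ T) :
    Measurable fun s =>
      (fun v => -(phiR 0 w₁ v) + phiE B w₂ v) (min (max s 0) T) := by
  obtain ⟨M₁, hM₁⟩ := hw₁.bounded hT
  obtain ⟨M₂, hM₂⟩ := hw₂.bounded hT
  have hC1 := hw₁.measurable_clamp hT
  have hC2 := hw₂.measurable_clamp hT
  have hP1 : Measurable fun s => psiR 0 w₁ (min (max s 0) T) :=
    measurable_clamp_of_monotoneOn hT (psiR_monoOn hM₁)
  have hphiE : Measurable fun s => phiE B w₂ (min (max s 0) T) := by
    unfold phiE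
    split
    · exact hC2
    · exact hC2.sub (measurable_clamp_of_monotoneOn hT (psiR_monoOn hM₂))
  have : Measurable fun s => -(phiR 0 w₁ (min (max s 0) T)) + phiE B w₂ (min (max s 0) T) := by
    unfold phiR
    exact (hC1.sub hP1).neg.add hphiE
  exact this

lemma meas_clamp_two {w₂ : ℝ → ℝ} (hw₂ : Cadlag w₂) (B : ℝ≥0∞) {T : ℝ} (hT : 0 ≤ T) :
    Measurable fun s => (fun v => -(phiE B w₂ v)) (min (max s 0) T) := by
  obtain ⟨M₂, hM₂⟩ := hw₂.bounded hT
  have hC2 := hw₂.measurable_clamp hT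
  have hphiE : Measurable fun s => phiE B w₂ (min (max s 0) T) := by
    unfold phiE
    split
    · exact hC2
    · exact hC2.sub (measurable_clamp_of_monotoneOn hT (psiR_monoOn hM₂))
  exact hphiE.neg

lemma bdd_one {w₁ w₂ : ℝ → ℝ} {M₁ M₂ T : ℝ} (hM₁ : BddOn w₁ M₁ T) (hM₂ : BddOn w₂ M₂ T)
    (B : ℝ≥0∞) : BddOn (fun s => -(phiR 0 w₁ s) + phiE B w₂ s) (2*M₁ + 2*M₂) T := by
  intro s hs
  calc |(-(phiR 0 w₁ s) + phiE B w₂ s)| ≤ |phiR 0 w₁ s| + |phiE B w₂ s| := by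
        rw [← abs_neg (phiR 0 w₁ s)]; exact abs_add_le _ _
    _ ≤ 2*M₁ + 2*M₂ := add_le_add (abs_phiR_le le_rfl hM₁ hs) (abs_phiE_le B hM₂ hs)

lemma bdd_two {w₂ : ℝ → ℝ} {M₂ T : ℝ} (hM₂ : BddOn w₂ M₂ T) (B : ℝ≥0∞) :
    BddOn (fun s => -(phiE B w₂ s)) (2*M₂) T := by
  intro s hs
  rw [abs_neg]
  exact abs_phiE_le B hM₂ hs

end Primitive

/-- **Continuity of the auxiliary solution map `ξ : [0,∞] × ℝ² × D² → D²`, and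
preservation of continuity.**  If `Bⁿ → B` in `[0,∞]` (order topology),
`bⁿ → b` in `ℝ²`, and `yⁿ → y` uniformly on bounded intervals, then
`wⁿ = ξ(Bⁿ,bⁿ,yⁿ) → w = ξ(B,b,y)` uniformly on bounded intervals; moreover if
`y` is continuous then so is `w`. -/
theorem aux_solution_map_continuous
    (Bs : ℕ → ℝ≥0∞) (B : ℝ≥0∞) (bs₁ bs₂ : ℕ → ℝ) (b₁ b₂ : ℝ)
    (ys₁ ys₂ : ℕ → ℝ → ℝ) (y₁ y₂ : ℝ → ℝ)
    (hys : ∀ n, Cadlag (ys₁ n) ∧ Cadlag (ys₂ n)) (hy₁ : Cadlag y₁) (hy₂ : Cadlag y₂)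
    (ws₁ ws₂ : ℕ → ℝ → ℝ) (w₁ w₂ : ℝ → ℝ)
    (hsols : ∀ n, IsAuxSolution (Bs n) (bs₁ n) (bs₂ n) (ys₁ n) (ys₂ n) (ws₁ n) (ws₂ n))
    (hsol : IsAuxSolution B b₁ b₂ y₁ y₂ w₁ w₂)
    (hB : Tendsto Bs atTop (nhds B))
    (hb₁ : Tendsto bs₁ atTop (nhds b₁)) (hb₂ : Tendsto bs₂ atTop (nhds b₂))
    (hyconv₁ : ∀ t ≥ (0:ℝ),
      Tendsto (fun n => unif (fun s => ys₁ n s - y₁ s) t) atTop (nhds 0))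
    (hyconv₂ : ∀ t ≥ (0:ℝ),
      Tendsto (fun n => unif (fun s => ys₂ n s - y₂ s) t) atTop (nhds 0)) :
    ((∀ t ≥ (0:ℝ),
        Tendsto (fun n => unif (fun s => ws₁ n s - w₁ s) t) atTop (nhds 0)) ∧
      (∀ t ≥ (0:ℝ),
        Tendsto (fun n => unif (fun s => ws₂ n s - w₂ s) t) atTop (nhds 0))) ∧
    (ContinuousOn y₁ (Set.Ici 0) → ContinuousOn y₂ (Set.Ici 0) →
      ContinuousOn w₁ (Set.Ici 0) ∧ ContinuousOn w₂ (Set.Ici 0)) := by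
  have hmain : ∀ t : ℝ, 0 ≤ t →
      Tendsto (fun n => unif (fun s => ws₁ n s - w₁ s) t) atTop (nhds 0) ∧
      Tendsto (fun n => unif (fun s => ws₂ n s - w₂ s) t) atTop (nhds 0) := by
    intro t ht
    obtain ⟨M1, hM1⟩ := hy₁.bounded ht
    obtain ⟨M2, hM2⟩ := hy₂.bounded ht
    set A : ℕ → ℝ := fun n =>
      3*(|bs₁ n - b₁| + unif (fun s => ys₁ n s - y₁ s) t)
        + (|bs₂ n - b₂| + unif (fun s => ys₂ n s - y₂ s) t)
        + 4 * unif (fun s => psiE (Bs n) w₂ s - psiE B w₂ s) t * t with hAdef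
    have hcore : ∀ n, unif (fun s => ws₁ n s - w₁ s) t ≤ A n * Real.exp (8*t) ∧
        unif (fun s => ws₂ n s - w₂ s) t ≤ A n * Real.exp (8*t) := by
      intro n
      obtain ⟨N1, hN1⟩ := (hys n).1.bounded ht
      obtain ⟨N2, hN2⟩ := (hys n).2.bounded ht
      exact core_estimate hsol (hsols n) ht
        ⟨N1 + M1, fun u hu => (abs_sub _ _).trans (add_le_add (hN1 u hu) (hM1 u hu))⟩
        ⟨N2 + M2, fun u hu => (abs_sub _ _).trans (add_le_add (hN2 u hu) (hM2 u hu))⟩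
    have hb₁' : Tendsto (fun n => |bs₁ n - b₁|) atTop (nhds 0) := by
      have h0 : Tendsto (fun n => bs₁ n - b₁) atTop (nhds (b₁ - b₁)) :=
        hb₁.sub tendsto_const_nhds
      rw [sub_self] at h0
      simpa using h0.abs
    have hb₂' : Tendsto (fun n => |bs₂ n - b₂|) atTop (nhds 0) := by
      have h0 : Tendsto (fun n => bs₂ n - b₂) atTop (nhds (b₂ - b₂)) :=
        hb₂.sub tendsto_const_nhds
      rw [sub_self] at h0
      simpa using h0.abs
    have hc := tendsto_unif_psiE hsol.2.1 ht hB
    have hA : Tendsto A atTop (nhds 0) := by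
      have h1 := (((hb₁'.add (hyconv₁ t ht)).const_mul 3).add
        ((hb₂'.add (hyconv₂ t ht)))).add ((hc.mul_const t).const_mul 4)
      have : (3 * ((0:ℝ) + 0) + (0 + 0) + 4 * (0 * t)) = 0 := by ring
      rw [this] at h1
      refine h1.congr fun n => ?_
      simp only [hAdef]; ring
    have hAe : Tendsto (fun n => A n * Real.exp (8*t)) atTop (nhds 0) := by
      simpa using hA.mul_const (Real.exp (8*t))
    exact ⟨squeeze_zero (fun n => unif_nonneg) (fun n => (hcore n).1) hAe,
      squeeze_zero (fun n => unif_nonneg) (fun n => (hcore n).2) hAe⟩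
  refine ⟨⟨fun t ht => (hmain t ht).1, fun t ht => (hmain t ht).2⟩, ?_⟩
  intro hy₁c hy₂c
  obtain ⟨hw₁cad, hw₂cad, heq₁, heq₂, _⟩ := hsol
  have hw₁c : ContinuousOn w₁ (Set.Ici 0) := by
    intro t₀ ht₀
    have ht₀' : (0:ℝ) ≤ t₀ := ht₀
    set T : ℝ := t₀ + 1 with hTdef
    have hT : 0 ≤ T := by simp only [hTdef]; linarith
    obtain ⟨M₁, hM₁⟩ := hw₁cad.bounded hT
    obtain ⟨M₂, hM₂⟩ := hw₂cad.bounded hT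
    have hM₁ : BddOn w₁ M₁ T := hM₁
    have hM₂ : BddOn w₂ M₂ T := hM₂
    have hprim := contOn_primitive hT (meas_clamp_one hw₁cad hw₂cad B hT)
      (bdd_one hM₁ hM₂ B)
    have hcont : ContinuousOn
        (fun v => b₁ + y₁ v + ∫ s in (0:ℝ)..v, (-(phiR 0 w₁ s) + phiE B w₂ s))
        (Set.Icc 0 T) :=
      (continuousOn_const.add (hy₁c.mono fun u hu => hu.1)).add hprim
    have hw : ContinuousOn w₁ (Set.Icc 0 T) := hcont.congr fun u hu => heq₁ u hu.1
    have hmem : Set.Icc (0:ℝ) T ∈ nhdsWithin t₀ (Set.Ici 0) := by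
      rw [← Set.Ici_inter_Iic]
      exact Filter.inter_mem self_mem_nhdsWithin
        (mem_nhdsWithin_of_mem_nhds (Iic_mem_nhds (by simp [hTdef])))
    exact (hw t₀ ⟨ht₀', by simp [hTdef]⟩).mono_of_mem_nhdsWithin hmem
  refine ⟨hw₁c, ?_⟩
  have hpsic : ContinuousOn (psiR 0 w₁) (Set.Ici 0) := continuousOn_psiR hw₁c
  intro t₀ ht₀
  have ht₀' : (0:ℝ) ≤ t₀ := ht₀
  set T : ℝ := t₀ + 1 with hTdef
  have hT : 0 ≤ T := by simp only [hTdef]; linarith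
  obtain ⟨M₂, hM₂⟩ := hw₂cad.bounded hT
  have hM₂ : BddOn w₂ M₂ T := hM₂
  have hprim := contOn_primitive hT (meas_clamp_two hw₂cad B hT) (bdd_two hM₂ B)
  have hcont : ContinuousOn
      (fun v => b₂ + y₂ v + psiR 0 w₁ v + ∫ s in (0:ℝ)..v, -(phiE B w₂ s))
      (Set.Icc 0 T) :=
    ((continuousOn_const.add (hy₂c.mono fun u hu => hu.1)).add
      (hpsic.mono fun u hu => hu.1)).add hprim
  have hw : ContinuousOn w₂ (Set.Icc 0 T) := hcont.congr fun u hu => heq₂ u hu.1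
  have hmem : Set.Icc (0:ℝ) T ∈ nhdsWithin t₀ (Set.Ici 0) := by
    rw [← Set.Ici_inter_Iic]
    exact Filter.inter_mem self_mem_nhdsWithin
      (mem_nhdsWithin_of_mem_nhds (Iic_mem_nhds (by simp [hTdef])))
  exact (hw t₀ ⟨ht₀', by simp [hTdef]⟩).mono_of_mem_nhdsWithin hmem
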